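/- In the separable GSP auction with distinct scores, GSP is truthful for simple value maximizers: for a bidder with value v and any fixed competing scores s₁ > s₂ > … (products of others' weights and bids), reporting b = v obtains the highest slot whose GSP price is at most v; no report b' can obtain a strictly higher slot at a price ≤ v, nor the same slot at a strictly lower price. -/

import Mathlib

/-- The slot (0-indexed) obtained by bidding `b` with weight `β` against the `k`
competitor scores `s 0 > s 1 > …`: the number of competitors with score above `β·b`. -/
noncomputable def gspSlot (k : ℕ) (s : ℕ → ℝ) (β b : ℝ) : ℕ :=
  ((Finset.range k).filter (fun i => β * b < s i)).card

/-- The GSP price-per-click in that slot: the score of the competitor just below,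
divided by `β` (the minimum bid keeping the slot). -/
noncomputable def gspPrice (k : ℕ) (s : ℕ → ℝ) (β b : ℝ) : ℝ :=
  s (gspSlot k s β b) / β

lemma downclosed_eq_range (F : Finset ℕ) (h : ∀ j i, j ≤ i → i ∈ F → j ∈ F) :
    F = Finset.range F.card := by
  rcases F.eq_empty_or_nonempty with he | hne
  · simp [he]
  · have hm := F.max'_mem hne
    have hF : F = Finset.range (F.max' hne + 1) := by
      apply Finset.ext
      intro x
      simp only [Finset.mem_range, Nat.lt_succ_iff]
      constructor
      · intro hx; exact F.le_max' x hx
      · intro hx; exact h x _ hx hm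
    rw [hF] at *
    simp

lemma gsp_strict_anti (k : ℕ) (s : ℕ → ℝ) (hs_pos : ∀ i < k, 0 < s i)
    (hs_dec : ∀ i, i + 1 < k → s (i + 1) < s i) (hs_bot : s k = 0) :
    ∀ i j, i < j → j ≤ k → s j < s i := by
  intro i j hij hjk
  induction j with
  | zero => omega
  | succ n ih =>
    rcases Nat.lt_or_ge i n with h | h
    · have := ih h (by omega)
      rcases Nat.lt_or_ge (n+1) k with h2 | h2
      · exact lt_trans (hs_dec n h2) this
      · have hnk : n + 1 = k := by omega
        rw [hnk, hs_bot]
        exact lt_trans (hs_pos n (by omega)) this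
    · have hin : i = n := by omega
      subst hin
      rcases Nat.lt_or_ge (i+1) k with h2 | h2
      · exact hs_dec i h2
      · have : i + 1 = k := by omega
        rw [this, hs_bot]
        exact hs_pos i (by omega)

lemma gspSlot_spec (k : ℕ) (s : ℕ → ℝ) (β b : ℝ) (hs_pos : ∀ i < k, 0 < s i)
    (hs_dec : ∀ i, i + 1 < k → s (i + 1) < s i) (hs_bot : s k = 0) :
    ∀ i, (i < gspSlot k s β b ↔ (i < k ∧ β * b < s i)) := by
  have key : ((Finset.range k).filter (fun i => β * b < s i)) =
      Finset.range (gspSlot k s β b) := by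
    apply downclosed_eq_range
    intro j i hji hi
    simp only [Finset.mem_filter, Finset.mem_range] at *
    refine ⟨by omega, ?_⟩
    rcases eq_or_lt_of_le hji with rfl | hji'
    · exact hi.2
    · exact lt_trans hi.2 (gsp_strict_anti k s hs_pos hs_dec hs_bot j i hji' (by omega))
  intro i
  constructor
  · intro h
    have : i ∈ Finset.range (gspSlot k s β b) := Finset.mem_range.mpr h
    rw [← key] at this
    simp only [Finset.mem_filter, Finset.mem_range] at this
    exact this
  · intro ⟨h1, h2⟩
    have : i ∈ ((Finset.range k).filter (fun i => β * b < s i)) := by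
      simp only [Finset.mem_filter, Finset.mem_range]; exact ⟨h1, h2⟩
    rw [key] at this
    exact Finset.mem_range.mp this

theorem gsp_truthful_for_simple_value_maximizers
    (k : ℕ) (s α : ℕ → ℝ) (β v : ℝ) (hβ : 0 < β) (hv : 0 < v)
    (hs_pos : ∀ i < k, 0 < s i) (hs_dec : ∀ i, i + 1 < k → s (i + 1) < s i)
    (hs_bot : s k = 0) (hdistinct : ∀ i < k, s i ≠ β * v)
    (hα_pos : ∀ j, 0 < α j) (hα_dec : ∀ j, α (j + 1) < α j) :
    gspPrice k s β v ≤ v ∧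
    (∀ b' : ℝ, gspPrice k s β b' ≤ v → α (gspSlot k s β b') ≤ α (gspSlot k s β v)) ∧
    (∀ b' : ℝ, gspSlot k s β b' = gspSlot k s β v →
      gspPrice k s β v ≤ gspPrice k s β b') := by
  have spec : ∀ b i, (i < gspSlot k s β b ↔ (i < k ∧ β * b < s i)) :=
    fun b => gspSlot_spec k s β b hs_pos hs_dec hs_bot
  set n := gspSlot k s β v with hn
  have hnk : n ≤ k := by
    have := Finset.card_filter_le (Finset.range k) (fun i => β * v < s i)
    simpa [hn, gspSlot] using this
  have hαanti : StrictAnti α := strictAnti_nat_of_succ_lt hα_dec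
  have hfeas : gspPrice k s β v ≤ v := by
    unfold gspPrice
    rw [← hn]
    rcases eq_or_lt_of_le hnk with heq | hlt
    · rw [heq, hs_bot]
      have : (0:ℝ)/β = 0 := by simp
      rw [this]; linarith
    · have hnot : ¬ (n < n) := lt_irrefl n
      rw [spec v n] at hnot
      push_neg at hnot
      have hle : s n ≤ β * v := hnot hlt
      have hne : s n ≠ β * v := hdistinct n hlt
      have : s n < β * v := lt_of_le_of_ne hle hne
      rw [div_le_iff₀ hβ]
      linarith [this]
  refine ⟨hfeas, ?_, ?_⟩
  · intro b' hb'
    have hj' : n ≤ gspSlot k s β b' := by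
      by_contra hcon
      push_neg at hcon
      have := (spec v (gspSlot k s β b')).mp hcon
      unfold gspPrice at hb'
      rw [div_le_iff₀ hβ] at hb'
      nlinarith [this.2]
    exact hαanti.antitone hj'
  · intro b' heq
    unfold gspPrice
    rw [heq]
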